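/- Corollary 1 (Z-Bias with binary instrument and binary confounder, no additive interaction). In the binary parametric setup, assume: (a) no additive interaction: p11 − p10 − p01 + p00 = 0; (b) monotonicity: p11 ≥ max(p10, p01), min(p10, p01) ≥ p00, and m_1(1) ≥ m_1(0), m_0(1) ≥ m_0(0). Then ACE_1^adj ≥ ACE_unadj ≥ ACE_1^true, ACE_0^adj ≥ ACE_unadj ≥ ACE_0^true, and ACE_adj ≥ ACE_unadj ≥ ACE_true. -/

import Mathlib

set_option maxHeartbeats 2000000 in


/-- Corollary 1: Z-Bias with binary instrument and binary confounder,
no additive interaction. -/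
theorem zbias_binary_additive
    (p π : ℝ) (hp : 0 < p) (hp' : p < 1) (hπ : 0 < π) (hπ' : π < 1)
    (p11 p10 p01 p00 : ℝ)
    (h11 : p11 ∈ Set.Icc (0:ℝ) 1) (h10 : p10 ∈ Set.Icc (0:ℝ) 1)
    (h01 : p01 ∈ Set.Icc (0:ℝ) 1) (h00 : p00 ∈ Set.Icc (0:ℝ) 1)
    (h00pos : 0 < p00) (h11lt : p11 < 1)
    (m11 m10 m01 m00 : ℝ)  -- m_a(u): m11 = m_1(1), m10 = m_1(0), m01 = m_0(1), m00 = m_0(0)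
    -- (a) no additive interaction
    (hNoAdd : p11 - p10 - p01 + p00 = 0)
    -- (b) monotonicity
    (hMono1 : p11 ≥ max p10 p01) (hMono2 : min p10 p01 ≥ p00)
    (hMonoY1 : m11 ≥ m10) (hMonoY0 : m01 ≥ m00)
    -- definitions of the population quantities
    (f : ℝ) (hf : f = p * π * p11 + p * (1 - π) * p10 + (1 - p) * π * p01
      + (1 - p) * (1 - π) * p00)
    (EY1 : ℝ) (hEY1 : EY1 = (p * π * p11 * m11 + p * (1 - π) * p10 * m10
      + (1 - p) * π * p01 * m11 + (1 - p) * (1 - π) * p00 * m10) / f)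
    (EY0 : ℝ) (hEY0 : EY0 = (p * π * (1 - p11) * m01 + p * (1 - π) * (1 - p10) * m00
      + (1 - p) * π * (1 - p01) * m01 + (1 - p) * (1 - π) * (1 - p00) * m00) / (1 - f))
    (ACEunadj : ℝ) (hACEunadj : ACEunadj = EY1 - EY0)
    (ACEtrue : ℝ) (hACEtrue : ACEtrue = π * (m11 - m01) + (1 - π) * (m10 - m00))
    (ACE1true : ℝ) (hACE1true : ACE1true = EY1 - (p * π * p11 * m01
      + p * (1 - π) * p10 * m00 + (1 - p) * π * p01 * m01
      + (1 - p) * (1 - π) * p00 * m00) / f)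
    (ACE0true : ℝ) (hACE0true : ACE0true = (p * π * (1 - p11) * m11
      + p * (1 - π) * (1 - p10) * m10 + (1 - p) * π * (1 - p01) * m11
      + (1 - p) * (1 - π) * (1 - p00) * m10) / (1 - f) - EY0)
    (μ1 μ0 : ℝ → ℝ)
    (hμ1one : μ1 1 = (π * p11 * m11 + (1 - π) * p10 * m10) / (π * p11 + (1 - π) * p10))
    (hμ1zero : μ1 0 = (π * p01 * m11 + (1 - π) * p00 * m10) / (π * p01 + (1 - π) * p00))
    (hμ0one : μ0 1 = (π * (1 - p11) * m01 + (1 - π) * (1 - p10) * m00)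
      / (π * (1 - p11) + (1 - π) * (1 - p10)))
    (hμ0zero : μ0 0 = (π * (1 - p01) * m01 + (1 - π) * (1 - p00) * m00)
      / (π * (1 - p01) + (1 - π) * (1 - p00)))
    (ACE1adj : ℝ) (hACE1adj : ACE1adj = EY1 - (p * (π * p11 + (1 - π) * p10) * μ0 1
      + (1 - p) * (π * p01 + (1 - π) * p00) * μ0 0) / f)
    (ACE0adj : ℝ) (hACE0adj : ACE0adj = (p * (π * (1 - p11) + (1 - π) * (1 - p10)) * μ1 1
      + (1 - p) * (π * (1 - p01) + (1 - π) * (1 - p00)) * μ1 0) / (1 - f) - EY0)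
    (ACEadj : ℝ) (hACEadj : ACEadj = p * (μ1 1 - μ0 1) + (1 - p) * (μ1 0 - μ0 0)) :
    (ACE1adj ≥ ACEunadj ∧ ACEunadj ≥ ACE1true) ∧
    (ACE0adj ≥ ACEunadj ∧ ACEunadj ≥ ACE0true) ∧
    (ACEadj ≥ ACEunadj ∧ ACEunadj ≥ ACEtrue) := by
  obtain ⟨h11l, h11r⟩ := h11
  obtain ⟨h10l, h10r⟩ := h10
  obtain ⟨h01l, h01r⟩ := h01
  obtain ⟨h00l, h00r⟩ := h00
  have hp11 : p11 = p10 + p01 - p00 := by linarith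
  subst hp11
  have hπ1 : 0 < 1 - π := by linarith
  have hq1 : 0 < 1 - p := by linarith
  have hd1 : 0 ≤ p01 - p00 := by linarith [le_trans hMono2 (min_le_right p10 p01)]
  have hdz : 0 ≤ p10 - p00 := by linarith [le_trans hMono2 (min_le_left p10 p01)]
  have hm1 : 0 ≤ m11 - m10 := by linarith
  have hm0 : 0 ≤ m01 - m00 := by linarith
  have hp10pos : 0 < p10 := by linarith
  have hp01pos : 0 < p01 := by linarith
  have h10lt : p10 < 1 := by linarith
  have h01lt : p01 < 1 := by linarith
  have hFpos : 0 < p * π * (p10 + p01 - p00) + p * (1 - π) * p10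
      + (1 - p) * π * p01 + (1 - p) * (1 - π) * p00 := by
    linarith [mul_pos (mul_pos hp hπ) (show (0:ℝ) < p10 + p01 - p00 by linarith),
      mul_pos (mul_pos hp hπ1) hp10pos, mul_pos (mul_pos hq1 hπ) hp01pos,
      mul_pos (mul_pos hq1 hπ1) h00pos]
  have hF1pos : 0 < 1 - (p * π * (p10 + p01 - p00) + p * (1 - π) * p10
      + (1 - p) * π * p01 + (1 - p) * (1 - π) * p00) := by
    linarith [mul_pos (mul_pos hp hπ) (show (0:ℝ) < 1 - (p10 + p01 - p00) by linarith),
      mul_pos (mul_pos hp hπ1) (show (0:ℝ) < 1 - p10 by linarith),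
      mul_pos (mul_pos hq1 hπ) (show (0:ℝ) < 1 - p01 by linarith),
      mul_pos (mul_pos hq1 hπ1) (show (0:ℝ) < 1 - p00 by linarith)]
  have hfpos : 0 < f := by rw [hf]; exact hFpos
  have hf1pos : 0 < 1 - f := by rw [hf]; exact hF1pos
  have hG1pos : 0 < π * (p10 + p01 - p00) + (1 - π) * p10 := by
    linarith [mul_pos hπ (show (0:ℝ) < p10 + p01 - p00 by linarith), mul_pos hπ1 hp10pos]
  have hG0pos : 0 < π * p01 + (1 - π) * p00 := by
    linarith [mul_pos hπ hp01pos, mul_pos hπ1 h00pos]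
  have hH1pos : 0 < π * (1 - (p10 + p01 - p00)) + (1 - π) * (1 - p10) := by
    linarith [mul_pos hπ (show (0:ℝ) < 1 - (p10 + p01 - p00) by linarith),
      mul_pos hπ1 (show (0:ℝ) < 1 - p10 by linarith)]
  have hH0pos : 0 < π * (1 - p01) + (1 - π) * (1 - p00) := by
    linarith [mul_pos hπ (show (0:ℝ) < 1 - p01 by linarith),
      mul_pos hπ1 (show (0:ℝ) < 1 - p00 by linarith)]
  have hK : 0 ≤ p * (1 - p) * π * (1 - π) * (p01 - p00) * ((p10 - p00) * (p10 - p00)) :=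
    mul_nonneg (mul_nonneg (mul_nonneg (mul_nonneg (mul_nonneg hp.le hq1.le) hπ.le)
      hπ1.le) hd1) (mul_nonneg hdz hdz)
  have hN : 0 ≤ π * (1 - π) * (p01 - p00) :=
    mul_nonneg (mul_nonneg hπ.le hπ1.le) hd1
  have k1 : ACEunadj - ACE1true
      = π * (1 - π) * (p01 - p00) * (m01 - m00) / (f * (1 - f)) := by
    rw [hACEunadj, hACE1true, hEY1, hEY0]
    field_simp
    rw [hf]
    ring
  have k2 : ACEunadj - ACE0true
      = π * (1 - π) * (p01 - p00) * (m11 - m10) / (f * (1 - f)) := by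
    rw [hACEunadj, hACE0true, hEY1, hEY0]
    field_simp
    rw [hf]
    ring
  have k3 : ACEunadj - ACEtrue
      = π * (1 - π) * (p01 - p00) * (m11 - m10) / f
        + π * (1 - π) * (p01 - p00) * (m01 - m00) / (1 - f) := by
    rw [hACEunadj, hACEtrue, hEY1, hEY0]
    field_simp
    rw [hf]
    ring
  have hH1ne := hH1pos.ne'
  have hH0ne := hH0pos.ne'
  have hG1ne := hG1pos.ne'
  have hG0ne := hG0pos.ne'
  have e1 : (π * (1 - (p10 + p01 - p00)) + (1 - π) * (1 - p10)) * μ0 1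
      = π * (1 - (p10 + p01 - p00)) * m01 + (1 - π) * (1 - p10) * m00 := by
    rw [hμ0one]; field_simp
  have e0 : (π * (1 - p01) + (1 - π) * (1 - p00)) * μ0 0
      = π * (1 - p01) * m01 + (1 - π) * (1 - p00) * m00 := by
    rw [hμ0zero]; field_simp
  have e1' : (π * (p10 + p01 - p00) + (1 - π) * p10) * μ1 1
      = π * (p10 + p01 - p00) * m11 + (1 - π) * p10 * m10 := by
    rw [hμ1one]; field_simp
  have e0' : (π * p01 + (1 - π) * p00) * μ1 0
      = π * p01 * m11 + (1 - π) * p00 * m10 := by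
    rw [hμ1zero]; field_simp
  have hEY0x : EY0 = (p * ((π * (1 - (p10 + p01 - p00)) + (1 - π) * (1 - p10)) * μ0 1)
      + (1 - p) * ((π * (1 - p01) + (1 - π) * (1 - p00)) * μ0 0)) / (1 - f) := by
    rw [e1, e0, hEY0]; ring_nf
  have hEY1x : EY1 = (p * ((π * (p10 + p01 - p00) + (1 - π) * p10) * μ1 1)
      + (1 - p) * ((π * p01 + (1 - π) * p00) * μ1 0)) / f := by
    rw [e1', e0', hEY1]; ring_nf
  have d00 : μ0 0 - μ0 1 = π * (1 - π) * (p01 - p00) * (p10 - p00) * (m01 - m00)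
      / ((π * (1 - (p10 + p01 - p00)) + (1 - π) * (1 - p10))
        * (π * (1 - p01) + (1 - π) * (1 - p00))) := by
    rw [hμ0one, hμ0zero]; field_simp; ring
  have d10 : μ1 0 - μ1 1 = π * (1 - π) * (p01 - p00) * (p10 - p00) * (m11 - m10)
      / ((π * (p10 + p01 - p00) + (1 - π) * p10) * (π * p01 + (1 - π) * p00)) := by
    rw [hμ1one, hμ1zero]; field_simp; ring
  have step4 : ACE1adj - ACEunadj
      = p * (1 - p) * (p10 - p00) * (μ0 0 - μ0 1) / (f * (1 - f)) := by
    rw [hACE1adj, hACEunadj, hEY0x]; field_simp; rw [hf]; ring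
  have step5 : ACE0adj - ACEunadj
      = p * (1 - p) * (p10 - p00) * (μ1 0 - μ1 1) / (f * (1 - f)) := by
    rw [hACE0adj, hACEunadj, hEY1x]; field_simp; rw [hf]; ring
  have step6 : ACEadj - ACEunadj
      = p * (1 - p) * (p10 - p00)
        * ((μ1 0 - μ1 1) / f + (μ0 0 - μ0 1) / (1 - f)) := by
    rw [hACEadj, hACEunadj, hEY1x, hEY0x]; field_simp; rw [hf]; ring
  have hN0 : 0 ≤ π * (1 - π) * (p01 - p00) * (p10 - p00) * (m01 - m00) :=
    mul_nonneg (mul_nonneg (mul_nonneg (mul_nonneg hπ.le hπ1.le) hd1) hdz) hm0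
  have hN1 : 0 ≤ π * (1 - π) * (p01 - p00) * (p10 - p00) * (m11 - m10) :=
    mul_nonneg (mul_nonneg (mul_nonneg (mul_nonneg hπ.le hπ1.le) hd1) hdz) hm1
  have hPP : 0 ≤ p * (1 - p) * (p10 - p00) :=
    mul_nonneg (mul_nonneg hp.le hq1.le) hdz
  refine ⟨⟨?_, ?_⟩, ⟨?_, ?_⟩, ?_, ?_⟩
  · rw [ge_iff_le, ← sub_nonneg, step4, d00]
    exact div_nonneg (mul_nonneg hPP (div_nonneg hN0 (mul_nonneg hH1pos.le hH0pos.le)))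
      (mul_nonneg hfpos.le hf1pos.le)
  · rw [ge_iff_le, ← sub_nonneg, k1]
    exact div_nonneg (mul_nonneg hN hm0) (mul_nonneg hfpos.le hf1pos.le)
  · rw [ge_iff_le, ← sub_nonneg, step5, d10]
    exact div_nonneg (mul_nonneg hPP (div_nonneg hN1 (mul_nonneg hG1pos.le hG0pos.le)))
      (mul_nonneg hfpos.le hf1pos.le)
  · rw [ge_iff_le, ← sub_nonneg, k2]
    exact div_nonneg (mul_nonneg hN hm1) (mul_nonneg hfpos.le hf1pos.le)
  · rw [ge_iff_le, ← sub_nonneg, step6, d10, d00]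
    exact mul_nonneg hPP (add_nonneg
      (div_nonneg (div_nonneg hN1 (mul_nonneg hG1pos.le hG0pos.le)) hfpos.le)
      (div_nonneg (div_nonneg hN0 (mul_nonneg hH1pos.le hH0pos.le)) hf1pos.le))
  · rw [ge_iff_le, ← sub_nonneg, k3]
    exact add_nonneg (div_nonneg (mul_nonneg hN hm1) hfpos.le)
      (div_nonneg (mul_nonneg hN hm0) hf1pos.le)
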